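/- Let G be a directed graph on n nodes such that for every node i, the node-complement graph Ĝ(i) contains both a source and a target. Then every node of G has in-degree d satisfying n - 2 ≤ d ≤ 1. -/
import Mathlib


open Finset

/-- A source is a node with no incoming edges (`G a b` means edge `a → b`). -/
def isSource {n : ℕ} (G : Fin n → Fin n → Prop) (s : Fin n) : Prop :=
  ∀ j, j ≠ s → ¬ G j s

/-- A target is a node receiving an edge from every other node. -/
def isTarget {n : ℕ} (G : Fin n → Fin n → Prop) (t : Fin n) : Prop :=
  ∀ j, j ≠ t → G j t

/-- The node-complement `Ĝ(i)`: complement all outgoing edges of `i`,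
leaving the rest of the graph intact. -/
def hatG {n : ℕ} (G : Fin n → Fin n → Prop) (i : Fin n) : Fin n → Fin n → Prop :=
  fun a b => if a = i then (b ≠ i ∧ ¬ G i b) else G a b

theorem stmt_7 {n : ℕ} (G : Fin n → Fin n → Prop) [DecidableRel G]
    (hirr : ∀ i, ¬ G i i)
    (h : ∀ i : Fin n, (∃ s, isSource (hatG G i) s) ∧ (∃ t, isTarget (hatG G i) t)) :
    ∀ k : Fin n,
      n - 2 ≤ (Finset.univ.filter fun j => j ≠ k ∧ G j k).card ∧
      (Finset.univ.filter fun j => j ≠ k ∧ G j k).card ≤ 1 := by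
  choose s hs using fun i => (h i).1
  choose t ht using fun i => (h i).2
  -- structure of sources of `hatG G i`
  have hsrc : ∀ i, (s i = i ∧ ∀ j, j ≠ i → ¬ G j i) ∨
      (s i ≠ i ∧ G i (s i) ∧ ∀ j, j ≠ i → j ≠ s i → ¬ G j (s i)) := by
    intro i
    by_cases hse : s i = i
    · left
      refine ⟨hse, fun j hj => ?_⟩
      have := hs i j (by rw [hse]; exact hj)
      rw [hse] at this
      simpa [hatG, hj] using this
    · right
      refine ⟨hse, ?_, fun j hj hj' => ?_⟩
      · have := hs i i (fun e => hse e.symm)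
        simpa [hatG, hse] using this
      · have := hs i j hj'
        simpa [hatG, hj] using this
  -- structure of targets of `hatG G i`
  have htgt : ∀ i, (t i = i ∧ ∀ j, j ≠ i → G j i) ∨
      (t i ≠ i ∧ ¬ G i (t i) ∧ ∀ j, j ≠ i → j ≠ t i → G j (t i)) := by
    intro i
    by_cases hte : t i = i
    · left
      refine ⟨hte, fun j hj => ?_⟩
      have := ht i j (by rw [hte]; exact hj)
      rw [hte] at this
      simpa [hatG, hj] using this
    · right
      refine ⟨hte, ?_, fun j hj hj' => ?_⟩
      · have := ht i i (fun e => hte e.symm)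
        simp only [hatG, if_pos rfl] at this
        exact this.2
      · have := ht i j hj'
        simpa [hatG, hj] using this
  -- `s` is injective
  have sinj : Function.Injective s := by
    intro a b hab
    rcases hsrc a with ⟨ha, ha0⟩ | ⟨ha, haG, ha1⟩ <;>
      rcases hsrc b with ⟨hb, hb0⟩ | ⟨hb, hbG, hb1⟩
    · rw [← ha, ← hb, hab]
    · exfalso
      have h1 : G b a := by rw [← hab, ha] at hbG; exact hbG
      have h2 : b ≠ a := by intro e; apply hb; rw [e]; exact ha
      exact ha0 b h2 h1
    · exfalso
      have h1 : G a b := by rw [hab, hb] at haG; exact haG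
      have h2 : a ≠ b := by intro e; apply ha; rw [e]; exact hb
      exact hb0 a h2 h1
    · by_contra hne
      have h2 : a ≠ s b := by intro e; apply ha; rw [hab, ← e]
      have := hb1 a hne h2
      rw [← hab] at this
      exact this haG
  -- `t` is injective
  have tinj : Function.Injective t := by
    intro a b hab
    rcases htgt a with ⟨ha, ha0⟩ | ⟨ha, haG, ha1⟩ <;>
      rcases htgt b with ⟨hb, hb0⟩ | ⟨hb, hbG, hb1⟩
    · rw [← ha, ← hb, hab]
    · exfalso
      have h2 : b ≠ a := by intro e; apply hb; rw [e]; exact ha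
      have h1 : G b a := ha0 b h2
      rw [← ha, hab] at h1
      exact hbG h1
    · exfalso
      have h2 : a ≠ b := by intro e; apply ha; rw [e]; exact hb
      have h1 : G a b := hb0 a h2
      rw [← hb, ← hab] at h1
      exact haG h1
    · by_contra hne
      have h2 : a ≠ s b ∨ True := Or.inr trivial
      have h3 : a ≠ t b := by intro e; apply ha; rw [hab, ← e]
      have := hb1 a hne h3
      rw [← hab] at this
      exact haG this
  have ssurj : Function.Surjective s := Finite.injective_iff_surjective.mp sinj
  have tsurj : Function.Surjective t := Finite.injective_iff_surjective.mp tinj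
  intro k
  constructor
  · -- lower bound via targets
    obtain ⟨i, hi⟩ := tsurj k
    rcases htgt i with ⟨he, hall⟩ | ⟨hne, hnG, hall⟩
    · -- k = t i = i, in-degree n - 1
      have hki : k = i := by rw [← hi, he]
      have hsub : univ.erase k ⊆ univ.filter fun j => j ≠ k ∧ G j k := by
        intro j hj
        rw [mem_erase] at hj
        rw [mem_filter]
        exact ⟨mem_univ j, hj.1, by rw [hki]; exact hall j (by rw [← hki]; exact hj.1)⟩
      have hc := card_le_card hsub
      have : (univ.erase k).card = n - 1 := by
        rw [card_erase_of_mem (mem_univ k), card_univ, Fintype.card_fin]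
      omega
    · -- k = t i ≠ i, in-degree n - 2
      have hsub : (univ.erase i).erase k ⊆ univ.filter fun j => j ≠ k ∧ G j k := by
        intro j hj
        rw [mem_erase, mem_erase] at hj
        rw [mem_filter]
        exact ⟨mem_univ j, hj.1, by rw [← hi]; exact hall j hj.2.1 (by rw [hi]; exact hj.1)⟩
      have hc := card_le_card hsub
      have hki : k ≠ i := by rw [← hi]; exact hne
      have h1 : ((univ.erase i).erase k).card = n - 1 - 1 := by
        rw [card_erase_of_mem (by rw [mem_erase]; exact ⟨hki, mem_univ k⟩),
          card_erase_of_mem (mem_univ i), card_univ, Fintype.card_fin]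
      omega
  · -- upper bound via sources
    obtain ⟨i, hi⟩ := ssurj k
    have hsub : (univ.filter fun j => j ≠ k ∧ G j k) ⊆ {i} := by
      intro j hj
      rw [mem_filter] at hj
      rw [mem_singleton]
      by_contra hji
      rcases hsrc i with ⟨he, hall⟩ | ⟨hne, hG, hall⟩
      · exact hall j (by rw [← he, hi]; exact hj.2.1) (by rw [← he, hi]; exact hj.2.2)
      · exact hall j hji (by rw [hi]; exact hj.2.1) (by rw [hi]; exact hj.2.2)
    have := card_le_card hsub
    simpa using this
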